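/- Let (R, ·, 𝔢) be a symmetric partial A-module algebra over a regular multiplier Hopf algebra A such that A·R (the linear span of elements a·x) has nondegenerate product. For m ∈ M(R) and a ∈ A, the pair of linear maps on A·R given by (a·m)(b·x) = a₍₁₎·(m(S(a₍₂₎)b·x)) and (b·x)(a·m) = a₍₂₎·((S⁻¹(a₍₁₎)b·x)m) is a well-defined multiplier, i.e. a·m ∈ M(A·R). -/

import Mathlib

/- ## Preliminaries: multiplier algebras and (regular) multiplier Hopf algebras -/

open scoped TensorProduct
open TensorProduct LinearMap
set_option linter.unusedSectionVars false

noncomputable section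

variable (k : Type*) [Field k]

section MultiplierAlgebra

variable (A : Type*) [NonUnitalRing A] [Module k A] [SMulCommClass k A A] [IsScalarTower k A A]

/-- The product of an algebra is *nondegenerate*. -/
def NondegProd : Prop :=
  (∀ a : A, (∀ b : A, a * b = 0) → a = 0) ∧ ∀ b : A, (∀ a : A, a * b = 0) → b = 0

/-- A multiplier of `A`: a pair `(U, V)` of linear maps with `U (a*b) = U a * b`,
`V (a*b) = a * V b` and `V a * b = a * U b`. -/
@[ext] structure Multiplier where
  U : A →ₗ[k] A
  V : A →ₗ[k] A
  U_mul : ∀ a b : A, U (a * b) = U a * b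
  V_mul : ∀ a b : A, V (a * b) = a * V b
  compat : ∀ a b : A, V a * b = a * U b

namespace Multiplier

variable {k A}

instance : Zero (Multiplier k A) := ⟨⟨0, 0, by simp, by simp, by simp⟩⟩
instance : Add (Multiplier k A) :=
  ⟨fun m n => ⟨m.U + n.U, m.V + n.V,
    by simp [m.U_mul, n.U_mul, add_mul],
    by simp [m.V_mul, n.V_mul, mul_add],
    by simp [add_mul, mul_add, m.compat, n.compat]⟩⟩
instance : Neg (Multiplier k A) :=
  ⟨fun m => ⟨-m.U, -m.V, by simp [m.U_mul], by simp [m.V_mul],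
    by simp [m.compat]⟩⟩
instance : SMul k (Multiplier k A) :=
  ⟨fun c m => ⟨c • m.U, c • m.V,
    by simp [m.U_mul, smul_mul_assoc],
    by simp [m.V_mul, mul_smul_comm],
    by simp [smul_mul_assoc, mul_smul_comm, m.compat]⟩⟩

@[simp] lemma zero_U : (0 : Multiplier k A).U = 0 := rfl
@[simp] lemma zero_V : (0 : Multiplier k A).V = 0 := rfl
@[simp] lemma add_U (m n : Multiplier k A) : (m + n).U = m.U + n.U := rfl
@[simp] lemma add_V (m n : Multiplier k A) : (m + n).V = m.V + n.V := rfl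
@[simp] lemma neg_U (m : Multiplier k A) : (-m).U = -m.U := rfl
@[simp] lemma neg_V (m : Multiplier k A) : (-m).V = -m.V := rfl
@[simp] lemma smul_U (c : k) (m : Multiplier k A) : (c • m).U = c • m.U := rfl
@[simp] lemma smul_V (c : k) (m : Multiplier k A) : (c • m).V = c • m.V := rfl

instance : AddCommGroup (Multiplier k A) where
  add_assoc a b c := by ext x <;> simp [add_assoc]
  zero_add a := by ext x <;> simp
  add_zero a := by ext x <;> simp
  add_comm a b := by ext x <;> simp [add_comm]
  neg_add_cancel a := by ext x <;> simp
  nsmul := nsmulRec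
  zsmul := zsmulRec

instance : Module k (Multiplier k A) where
  one_smul m := by ext x <;> simp
  mul_smul c d m := by ext x <;> simp [mul_smul]
  smul_zero c := by ext x <;> simp
  smul_add c m n := by ext x <;> simp
  add_smul c d m := by ext x <;> simp [add_smul]
  zero_smul m := by ext x <;> simp

instance : One (Multiplier k A) := ⟨⟨LinearMap.id, LinearMap.id, by simp, by simp, by simp⟩⟩
instance : Mul (Multiplier k A) :=
  ⟨fun m n => ⟨m.U ∘ₗ n.U, n.V ∘ₗ m.V,
    by simp [n.U_mul, m.U_mul],
    by simp [m.V_mul, n.V_mul],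
    by intro a b; simp only [LinearMap.comp_apply]; rw [n.compat, m.compat]⟩⟩

@[simp] lemma one_U : (1 : Multiplier k A).U = LinearMap.id := rfl
@[simp] lemma one_V : (1 : Multiplier k A).V = LinearMap.id := rfl
@[simp] lemma mul_U (m n : Multiplier k A) : (m * n).U = m.U ∘ₗ n.U := rfl
@[simp] lemma mul_V (m n : Multiplier k A) : (m * n).V = n.V ∘ₗ m.V := rfl

instance : Monoid (Multiplier k A) where
  mul_assoc a b c := by ext x <;> simp
  one_mul a := by ext x <;> simp
  mul_one a := by ext x <;> simp

/-- The canonical map `A → M(A)` given by left and right multiplication. -/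
def incl (a : A) : Multiplier k A :=
  ⟨LinearMap.mulLeft k a, LinearMap.mulRight k a,
    fun b c => by simp [mul_assoc], fun b c => by simp [mul_assoc],
    fun b c => by simp [mul_assoc]⟩

@[simp] lemma incl_U (a b : A) : (incl (k := k) a).U b = a * b := rfl
@[simp] lemma incl_V (a b : A) : (incl (k := k) a).V b = b * a := rfl

/-- The canonical map `A → M(A)` as a linear map. -/
def inclL : A →ₗ[k] Multiplier k A where
  toFun := incl
  map_add' a b := by ext x <;> simp [add_mul, mul_add]
  map_smul' c a := by ext x <;> simp [smul_mul_assoc, mul_smul_comm]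

@[simp] lemma inclL_apply (a : A) : (inclL (k := k) a) = incl a := rfl

/-- The `U`-component, as a linear map. -/
def Ulm : Multiplier k A →ₗ[k] A →ₗ[k] A where
  toFun m := m.U
  map_add' _ _ := rfl
  map_smul' _ _ := rfl

/-- The `V`-component, as a linear map. -/
def Vlm : Multiplier k A →ₗ[k] A →ₗ[k] A where
  toFun m := m.V
  map_add' _ _ := rfl
  map_smul' _ _ := rfl

end Multiplier

end MultiplierAlgebra

section Tensor

variable (R : Type*) [NonUnitalRing R] [Module k R] [SMulCommClass k R R] [IsScalarTower k R R]
variable (A : Type*) [NonUnitalRing A] [Module k A] [SMulCommClass k A A] [IsScalarTower k A A]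

/-- The multiplier `1 ⊗ a` of `R ⊗ A`. -/
def oneT (a : A) : Multiplier k (R ⊗[k] A) where
  U := lTensor R (LinearMap.mulLeft k a)
  V := lTensor R (LinearMap.mulRight k a)
  U_mul u v := by
    induction u with
    | zero => simp
    | add u₁ u₂ h₁ h₂ => simp [add_mul, h₁, h₂]
    | tmul x b =>
      induction v with
      | zero => simp
      | add v₁ v₂ h₁ h₂ => simp [mul_add, h₁, h₂]
      | tmul y c => simp [Algebra.TensorProduct.tmul_mul_tmul, mul_assoc]
  V_mul u v := by
    induction u with
    | zero => simp
    | add u₁ u₂ h₁ h₂ => simp [add_mul, h₁, h₂]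
    | tmul x b =>
      induction v with
      | zero => simp
      | add v₁ v₂ h₁ h₂ => simp [mul_add, h₁, h₂]
      | tmul y c => simp [Algebra.TensorProduct.tmul_mul_tmul, mul_assoc]
  compat u v := by
    induction u with
    | zero => simp
    | add u₁ u₂ h₁ h₂ => simp [add_mul, h₁, h₂]
    | tmul x b =>
      induction v with
      | zero => simp
      | add v₁ v₂ h₁ h₂ => simp only [map_add, mul_add, h₁, h₂]
      | tmul y c => simp [Algebra.TensorProduct.tmul_mul_tmul, mul_assoc]

/-- The multiplier `x ⊗ 1` of `R ⊗ A`. -/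
def tOne (x : R) : Multiplier k (R ⊗[k] A) where
  U := rTensor A (LinearMap.mulLeft k x)
  V := rTensor A (LinearMap.mulRight k x)
  U_mul u v := by
    induction u with
    | zero => simp
    | add u₁ u₂ h₁ h₂ => simp [add_mul, h₁, h₂]
    | tmul y b =>
      induction v with
      | zero => simp
      | add v₁ v₂ h₁ h₂ => simp [mul_add, h₁, h₂]
      | tmul z c => simp [Algebra.TensorProduct.tmul_mul_tmul, mul_assoc]
  V_mul u v := by
    induction u with
    | zero => simp
    | add u₁ u₂ h₁ h₂ => simp [add_mul, h₁, h₂]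
    | tmul y b =>
      induction v with
      | zero => simp
      | add v₁ v₂ h₁ h₂ => simp [mul_add, h₁, h₂]
      | tmul z c => simp [Algebra.TensorProduct.tmul_mul_tmul, mul_assoc]
  compat u v := by
    induction u with
    | zero => simp
    | add u₁ u₂ h₁ h₂ => simp [add_mul, h₁, h₂]
    | tmul y b =>
      induction v with
      | zero => simp
      | add v₁ v₂ h₁ h₂ => simp only [map_add, mul_add, h₁, h₂]
      | tmul z c => simp [Algebra.TensorProduct.tmul_mul_tmul, mul_assoc]

/-- The multiplier `m ⊗ a` of `R ⊗ A`, for `m ∈ M(R)`, `a ∈ A`. -/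
def mtensor (m : Multiplier k R) (a : A) : Multiplier k (R ⊗[k] A) where
  U := map m.U (LinearMap.mulLeft k a)
  V := map m.V (LinearMap.mulRight k a)
  U_mul u v := by
    induction u with
    | zero => simp
    | add u₁ u₂ h₁ h₂ => simp [add_mul, h₁, h₂]
    | tmul y b =>
      induction v with
      | zero => simp
      | add v₁ v₂ h₁ h₂ => simp [mul_add, h₁, h₂]
      | tmul z c => simp [Algebra.TensorProduct.tmul_mul_tmul, mul_assoc, m.U_mul]
  V_mul u v := by
    induction u with
    | zero => simp
    | add u₁ u₂ h₁ h₂ => simp [add_mul, h₁, h₂]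
    | tmul y b =>
      induction v with
      | zero => simp
      | add v₁ v₂ h₁ h₂ => simp [mul_add, h₁, h₂]
      | tmul z c => simp [Algebra.TensorProduct.tmul_mul_tmul, mul_assoc, m.V_mul]
  compat u v := by
    induction u with
    | zero => simp
    | add u₁ u₂ h₁ h₂ => simp [add_mul, h₁, h₂]
    | tmul y b =>
      induction v with
      | zero => simp
      | add v₁ v₂ h₁ h₂ => simp only [map_add, mul_add, h₁, h₂]
      | tmul z c => simp [Algebra.TensorProduct.tmul_mul_tmul, mul_assoc, m.compat]

/-- The multiplier `m ⊗ 1` of `R ⊗ A`, for `m ∈ M(R)`. -/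
def mtensorOne (m : Multiplier k R) : Multiplier k (R ⊗[k] A) where
  U := map m.U LinearMap.id
  V := map m.V LinearMap.id
  U_mul u v := by
    induction u with
    | zero => simp
    | add u₁ u₂ h₁ h₂ => simp [add_mul, h₁, h₂]
    | tmul y b =>
      induction v with
      | zero => simp
      | add v₁ v₂ h₁ h₂ => simp [mul_add, h₁, h₂]
      | tmul z c => simp [Algebra.TensorProduct.tmul_mul_tmul, m.U_mul]
  V_mul u v := by
    induction u with
    | zero => simp
    | add u₁ u₂ h₁ h₂ => simp [add_mul, h₁, h₂]
    | tmul y b =>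
      induction v with
      | zero => simp
      | add v₁ v₂ h₁ h₂ => simp [mul_add, h₁, h₂]
      | tmul z c => simp [Algebra.TensorProduct.tmul_mul_tmul, m.V_mul]
  compat u v := by
    induction u with
    | zero => simp
    | add u₁ u₂ h₁ h₂ => simp [add_mul, h₁, h₂]
    | tmul y b =>
      induction v with
      | zero => simp
      | add v₁ v₂ h₁ h₂ => simp only [map_add, mul_add, h₁, h₂]
      | tmul z c => simp [Algebra.TensorProduct.tmul_mul_tmul, m.compat]

/-- Apply a functional to the second tensor factor:  `x ⊗ a ↦ f a • x`. -/
def apT (f : A →ₗ[k] k) : R ⊗[k] A →ₗ[k] R :=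
  (TensorProduct.rid k R).toLinearMap ∘ₗ lTensor R f

@[simp] lemma apT_tmul (f : A →ₗ[k] k) (x : R) (a : A) :
    apT k R A f (x ⊗ₜ a) = f a • x := rfl

/-- Sum of pure tensors attached to a list of pairs. -/
def psum {M N : Type*} [AddCommGroup M] [Module k M] [AddCommGroup N] [Module k N]
    (l : List (M × N)) : M ⊗[k] N :=
  (l.map fun p => p.1 ⊗ₜ[k] p.2).sum

end Tensor
section MHAdef

variable (A : Type*) [NonUnitalRing A] [Module k A] [SMulCommClass k A A] [IsScalarTower k A A]

/-- Apply a functional to the first tensor factor: `a ⊗ b ↦ f a • b`. -/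
def apF (f : A →ₗ[k] k) : A ⊗[k] A →ₗ[k] A :=
  (TensorProduct.lid k A).toLinearMap ∘ₗ rTensor A f

@[simp] lemma apF_tmul (f : A →ₗ[k] k) (a b : A) : apF k A f (a ⊗ₜ b) = f a • b := rfl

/-- A *regular multiplier Hopf algebra* structure on a nondegenerate algebra `A`:
a comultiplication `Δ : A → M(A ⊗ A)` such that the four Galois-type maps
`T1 : a ⊗ b ↦ Δ(a)(1 ⊗ b)`, `T2 : a ⊗ b ↦ (a ⊗ 1)Δ(b)`, `T3 : a ⊗ b ↦ Δ(a)(b ⊗ 1)`,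
`T4 : a ⊗ b ↦ (1 ⊗ b)Δ(a)` are (well-defined and) bijective from `A ⊗ A` onto `A ⊗ A`,
together with its counit `ε` and (bijective) antipode `S`, subject to the usual axioms
(coassociativity and the counit and antipode laws, in their `T1`/`T2`-covered form). -/
structure MHA where
  nondeg : NondegProd A
  comul : A →ₗ[k] Multiplier k (A ⊗[k] A)
  comul_mul : ∀ a b : A, comul (a * b) = comul a * comul b
  T1 : A ⊗[k] A ≃ₗ[k] A ⊗[k] A
  T2 : A ⊗[k] A ≃ₗ[k] A ⊗[k] A
  T3 : A ⊗[k] A ≃ₗ[k] A ⊗[k] A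
  T4 : A ⊗[k] A ≃ₗ[k] A ⊗[k] A
  hT1 : ∀ a b : A, comul a * oneT k A A b = Multiplier.incl (T1 (a ⊗ₜ b))
  hT2 : ∀ a b : A, tOne k A A a * comul b = Multiplier.incl (T2 (a ⊗ₜ b))
  hT3 : ∀ a b : A, comul a * tOne k A A b = Multiplier.incl (T3 (a ⊗ₜ b))
  hT4 : ∀ a b : A, oneT k A A b * comul a = Multiplier.incl (T4 (a ⊗ₜ b))
  coassoc : ∀ a b c : A,
    (TensorProduct.assoc k A A A)
        ((rTensor A (T2.toLinearMap ∘ₗ TensorProduct.mk k A A a)) (T1 (b ⊗ₜ c)))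
      = (lTensor A (T1.toLinearMap ∘ₗ (TensorProduct.mk k A A).flip c)) (T2 (a ⊗ₜ b))
  counit : A →ₗ[k] k
  counit_mul : ∀ a b : A, counit (a * b) = counit a * counit b
  hcounit1 : ∀ a b : A, apF k A counit (T1 (a ⊗ₜ b)) = a * b
  hcounit2 : ∀ a b : A, apT k A A counit (T2 (a ⊗ₜ b)) = a * b
  S : A ≃ₗ[k] A
  S_antimul : ∀ a b : A, S (a * b) = S b * S a
  hS1 : ∀ a b : A, LinearMap.mul' k A ((rTensor A S.toLinearMap) (T1 (a ⊗ₜ b))) = counit a • b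
  hS2 : ∀ a b : A, LinearMap.mul' k A ((lTensor A S.toLinearMap) (T2 (a ⊗ₜ b))) = counit b • a

end MHAdef

section PComod

variable {k}
variable {A : Type*} [NonUnitalRing A] [Module k A] [SMulCommClass k A A] [IsScalarTower k A A]
variable (H : MHA k A)
variable (R : Type*) [NonUnitalRing R] [Module k R] [SMulCommClass k R R] [IsScalarTower k R R]

/-- `(R, ρ, E)` is a *partial `A`-comodule algebra* (Definition 3.5).  The data
`rmap`/`lmap` records the elements `ρ(x)(1 ⊗ a)` and `(1 ⊗ a)ρ(x)` of `R ⊗ A`.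
Condition `c3` is the coassociativity
`(ρ ⊗ ι)(ρ(x)) = (E ⊗ 1)(ι ⊗ Δ)(ρ(x))` in its fully covered form
`x⁽⁰⁾⁽⁰⁾ ⊗ x⁽⁰⁾⁽¹⁾a ⊗ x⁽¹⁾b = Σᵢ E(x⁽⁰⁾ ⊗ (x⁽¹⁾aᵢ)₍₁₎) ⊗ (x⁽¹⁾aᵢ)₍₂₎bᵢ`
for any representation `Σᵢ aᵢ ⊗ bᵢ = T1⁻¹(a ⊗ b)`. -/
structure IsPComod (ρ : R →ₗ[k] Multiplier k (R ⊗[k] A)) (E : Multiplier k (R ⊗[k] A))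
    (rmap : R →ₗ[k] A →ₗ[k] R ⊗[k] A) (lmap : A →ₗ[k] R →ₗ[k] R ⊗[k] A) : Prop where
  ρ_mul : ∀ x y : R, ρ (x * y) = ρ x * ρ y
  ρ_inj : Function.Injective ρ
  E_idem : E * E = E
  hrmap : ∀ (x : R) (a : A), ρ x * oneT k R A a = Multiplier.incl (rmap x a)
  hlmap : ∀ (a : A) (x : R), oneT k R A a * ρ x = Multiplier.incl (lmap a x)
  c1l : ∀ a : A, ∃ l : List (Multiplier k R × A),
      oneT k R A a * E = (l.map fun p => mtensor k R A p.1 p.2).sum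
  c1r : ∀ a : A, ∃ l : List (Multiplier k R × A),
      E * oneT k R A a = (l.map fun p => mtensor k R A p.1 p.2).sum
  c2l : ∀ (x : R) (a : A), ∃ u : R ⊗[k] A, rmap x a = E.U u
  c2r : ∀ (a : A) (x : R), ∃ u : R ⊗[k] A, lmap a x = E.V u
  c3 : ∀ (x : R) (a b : A) (l : List (A × A)), psum k l = H.T1.symm (a ⊗ₜ b) →
      rTensor A (rmap.flip a) (rmap x b)
        = (l.map fun p => (rTensor A E.U) ((TensorProduct.assoc k R A A).symm
            ((lTensor R (H.T1.toLinearMap ∘ₗ (TensorProduct.mk k A A).flip p.2))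
              (rmap x p.1)))).sum

/-- A *symmetric* partial `A`-comodule algebra (Definition 3.5 (iv)):  additionally
`(ρ ⊗ ι)(ρ(x)) = (ι ⊗ Δ)(ρ(x))(E ⊗ 1)`, in the fully covered form
`x⁽⁰⁾⁽⁰⁾ ⊗ ax⁽⁰⁾⁽¹⁾ ⊗ bx⁽¹⁾ = Σᵢ (x⁽⁰⁾ ⊗ (aᵢx⁽¹⁾)₍₁₎)E ⊗ bᵢ(aᵢx⁽¹⁾)₍₂₎` for any
representation `Σᵢ aᵢ ⊗ bᵢ = T4⁻¹(a ⊗ b)`. -/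
structure IsSymPComod (ρ : R →ₗ[k] Multiplier k (R ⊗[k] A)) (E : Multiplier k (R ⊗[k] A))
    (rmap : R →ₗ[k] A →ₗ[k] R ⊗[k] A) (lmap : A →ₗ[k] R →ₗ[k] R ⊗[k] A)
    extends IsPComod H R ρ E rmap lmap : Prop where
  c4 : ∀ (x : R) (a b : A) (l : List (A × A)), psum k l = H.T4.symm (a ⊗ₜ b) →
      rTensor A (lmap a) (lmap b x)
        = (l.map fun p => (rTensor A E.V) ((TensorProduct.assoc k R A A).symm
            ((lTensor R (H.T4.toLinearMap ∘ₗ (TensorProduct.mk k A A).flip p.2))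
              (lmap p.1 x)))).sum

/-- `R` is a (global) right `A`-comodule algebra via `ρ` (Definition 3.1), with
`rmap`/`lmap` recording `ρ(x)(1 ⊗ a) ∈ R ⊗ A` and `(1 ⊗ a)ρ(x) ∈ R ⊗ A`;
coassociativity `(ρ ⊗ ι)ρ = (ι ⊗ Δ)ρ` is stated in its fully covered form. -/
structure IsComod (ρ : R →ₗ[k] Multiplier k (R ⊗[k] A))
    (rmap : R →ₗ[k] A →ₗ[k] R ⊗[k] A) (lmap : A →ₗ[k] R →ₗ[k] R ⊗[k] A) : Prop where
  ρ_mul : ∀ x y : R, ρ (x * y) = ρ x * ρ y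
  ρ_inj : Function.Injective ρ
  hrmap : ∀ (x : R) (a : A), ρ x * oneT k R A a = Multiplier.incl (rmap x a)
  hlmap : ∀ (a : A) (x : R), oneT k R A a * ρ x = Multiplier.incl (lmap a x)
  coassoc : ∀ (x : R) (a b : A) (l : List (A × A)), psum k l = H.T1.symm (a ⊗ₜ b) →
      rTensor A (rmap.flip a) (rmap x b)
        = (l.map fun p => (TensorProduct.assoc k R A A).symm
            ((lTensor R (H.T1.toLinearMap ∘ₗ (TensorProduct.mk k A A).flip p.2))
              (rmap x p.1))).sum

end PComod
section PMod

variable {k}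
variable {A : Type*} [NonUnitalRing A] [Module k A] [SMulCommClass k A A] [IsScalarTower k A A]
variable (H : MHA k A)
variable (R : Type*) [NonUnitalRing R] [Module k R] [SMulCommClass k R R] [IsScalarTower k R R]

/-- `(R, ⬝, 𝔢)` is a *partial `A`-module algebra* (Definition 4.5).  Sweedler
expressions are stated for arbitrary list representations of the corresponding
covered elements; e.g. condition (i) reads
`a ⬝ (x (b ⬝ y)) = Σᵢ (pᵢ ⬝ x)(qᵢ ⬝ y)` whenever `Σᵢ pᵢ ⊗ qᵢ = Δ(a)(1 ⊗ b) = T1(a ⊗ b)`,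
and in (ii) one uses the covering `a₍₁₎ ⊗ S(a₍₂₎)b = (ι ⊗ S)((1 ⊗ S⁻¹(b))Δ(a))`. -/
structure IsPModAlg (act : A →ₗ[k] R →ₗ[k] R) (e : A →ₗ[k] Multiplier k R) : Prop where
  cond1 : ∀ (a b : A) (x y : R) (l : List (A × A)), psum k l = H.T1 (a ⊗ₜ b) →
      act a (x * act b y) = (l.map fun p => act p.1 x * act p.2 y).sum
  cond2a : ∀ (a b : A) (x : R) (l : List (A × A)), psum k l = H.T4 (a ⊗ₜ H.S.symm b) →
      (e a).U (act b x) = (l.map fun p => act p.1 (act (H.S p.2) x)).sum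
  cond2b : ∀ (a : A) (x : R),
      (e a).U x ∈ Submodule.span k {z : R | ∃ (b : A) (y : R), z = act b y}
  cond3 : ∀ (la : List A) (lx : List R), ∃ b : A,
      (∀ a ∈ la, a * b = a ∧ b * a = a) ∧ ∀ a ∈ la, ∀ x ∈ lx, act a x = act a (act b x)
  cond4 : ∀ x : R, (∀ a : A, act a x = 0) → x = 0

/-- A *symmetric* partial `A`-module algebra (Definition 4.5 (v)-(vii)).  In (vi),
one uses the covering `a₍₂₎ ⊗ S⁻¹(a₍₁₎)b = σ((S⁻¹ ⊗ ι)((S(b) ⊗ 1)Δ(a)))`. -/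
structure IsSymPModAlg (act : A →ₗ[k] R →ₗ[k] R) (e : A →ₗ[k] Multiplier k R)
    extends IsPModAlg H R act e : Prop where
  cond5 : ∀ (a b : A) (x y : R) (l : List (A × A)), psum k l = H.T3 (a ⊗ₜ b) →
      act a (act b x * y) = (l.map fun p => act p.1 x * act p.2 y).sum
  cond6 : ∀ (a b : A) (x : R) (l : List (A × A)), psum k l = H.T2 (H.S b ⊗ₜ a) →
      (e a).V (act b x) = (l.map fun p => act p.2 (act (H.S.symm p.1) x)).sum
  cond7 : ∀ (a : A) (x : R),
      (e a).V x ∈ Submodule.span k {z : R | ∃ (b : A) (y : R), z = act b y}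

/-- `R` is a (global, unitary) left `A`-module algebra (Definition 4.1). -/
structure IsModAlg (act : A →ₗ[k] R →ₗ[k] R) : Prop where
  assoc : ∀ (a b : A) (x : R), act a (act b x) = act (a * b) x
  unital : Submodule.span k {z : R | ∃ (a : A) (x : R), z = act a x} = ⊤
  mul_cond : ∀ (a b : A) (x y : R) (l : List (A × A)), psum k l = H.T1 (a ⊗ₜ b) →
      act a (x * act b y) = (l.map fun p => act p.1 x * act p.2 y).sum

end PMod

section Dual

variable {k}
variable {A : Type*} [NonUnitalRing A] [Module k A] [SMulCommClass k A A] [IsScalarTower k A A]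
variable (H : MHA k A)
variable (Ahat : Type*) [NonUnitalRing Ahat] [Module k Ahat] [SMulCommClass k Ahat Ahat]
  [IsScalarTower k Ahat Ahat] (Hh : MHA k Ahat)

/-- A realization of the *dual* `Â = {φ(– a) : a ∈ A}` of a regular multiplier Hopf
algebra `A` with left integral `φ` (as in (2.1)): a regular multiplier Hopf algebra
`Â` together with the linear bijections `hat : a ↦ φ(– a)` and `hat' : b ↦ φ(b –)`,
the evaluation pairing `ev`, the product rule `(ŵ û)(c) = (w ⊗ u)(Δ c)`, the
coproduct rules (2.5) and (2.6) read through `hat`, and the modular element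
`δ ∈ M(A)` of (5.1), `(φ ⊗ ι)Δ(a) = φ(a)δ`. -/
structure DualPair where
  φ : A →ₗ[k] k
  φ_ne : φ ≠ 0
  /-- `(ι ⊗ φ)((b ⊗ 1)Δ(a)) = φ(a) b` : left invariance of the integral. -/
  φ_int : ∀ a b : A, apT k A A φ (H.T2 (b ⊗ₜ a)) = φ a • b
  /-- `(ι ⊗ φ)(Δ(a)(b ⊗ 1)) = φ(a) b` : left invariance of the integral. -/
  φ_int' : ∀ a b : A, apT k A A φ (H.T3 (a ⊗ₜ b)) = φ a • b
  hat : A ≃ₗ[k] Ahat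
  hat' : A ≃ₗ[k] Ahat
  ev : Ahat →ₗ[k] A →ₗ[k] k
  ev_hat : ∀ a x : A, ev (hat a) x = φ (x * a)
  ev_hat' : ∀ b x : A, ev (hat' b) x = φ (b * x)
  /-- the product of `Â`: `(φ(– a) u)(c) = Σ φ(c₍₁₎ a) u(c₍₂₎)`. -/
  ev_mul : ∀ (a : A) (u : Ahat) (c : A),
      ev (hat a * u) c
        = (TensorProduct.lid k k) ((map φ (ev u)) (H.T3 (c ⊗ₜ a)))
  /-- identity (2.5): `Δ̂(φ(– a))(1 ⊗ φ(– b)) = φ(– S⁻¹(b₍₁₎)a) ⊗ φ(– b₍₂₎)`,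
  read through `hat⁻¹ ⊗ hat⁻¹` and covered on the right leg by `c`. -/
  hatT1 : ∀ a b c : A,
      (lTensor A (LinearMap.mulRight k c))
          ((map hat.symm.toLinearMap hat.symm.toLinearMap) (Hh.T1 (hat a ⊗ₜ hat b)))
        = rTensor A (LinearMap.mulRight k a ∘ₗ H.S.symm.toLinearMap) (H.T1 (b ⊗ₜ c))
  /-- identity (2.6): `(ι ⊗ Ŝ)((1 ⊗ Ŝ⁻¹(φ(– b)))Δ̂(φ(– a))) = φ(– b₍₁₎a) ⊗ φ(– b₍₂₎)`,
  read through `hat⁻¹ ⊗ hat⁻¹` and covered on the right leg by `c`. -/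
  hatT2 : ∀ a b c : A,
      (lTensor A (LinearMap.mulRight k c))
          ((map hat.symm.toLinearMap hat.symm.toLinearMap)
            ((lTensor Ahat Hh.S.toLinearMap) (Hh.T4 (hat a ⊗ₜ Hh.S.symm (hat b)))))
        = rTensor A (LinearMap.mulRight k a) (H.T1 (b ⊗ₜ c))
  /-- the modular element `δ`, with `(φ ⊗ ι)(Δ(a)(1 ⊗ b)) = φ(a) • (δ b)`. -/
  delta : Multiplier k A
  deltaInv : Multiplier k A
  delta_inv : delta * deltaInv = 1 ∧ deltaInv * delta = 1
  hdelta : ∀ a b : A, apF k A φ (H.T1 (a ⊗ₜ b)) = φ a • delta.U b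

end Dual
section Statements
variable {k}
variable {A : Type*} [NonUnitalRing A] [Module k A] [SMulCommClass k A A] [IsScalarTower k A A]
variable {R : Type*} [NonUnitalRing R] [Module k R] [SMulCommClass k R R] [IsScalarTower k R R]

/-- The subspace `A·R` of `R` (the linear span of the elements `a · x`). -/
def ARspan (act : A →ₗ[k] R →ₗ[k] R) : Submodule k R :=
  Submodule.span k {z : R | ∃ (a : A) (x : R), z = act a x}

namespace PMAux

section Lists

variable {k : Type*} [Field k]
variable {M N M' N' P : Type*} [AddCommGroup M] [Module k M] [AddCommGroup N] [Module k N]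
  [AddCommGroup M'] [Module k M'] [AddCommGroup N'] [Module k N']
  [AddCommGroup P] [Module k P]

lemma psum_cons (p : M × N) (l : List (M × N)) :
    psum k (p :: l) = p.1 ⊗ₜ[k] p.2 + psum k l := by simp [psum]

lemma exists_psum (t : M ⊗[k] N) : ∃ l : List (M × N), psum k l = t := by
  induction t with
  | zero => exact ⟨[], rfl⟩
  | tmul m n => exact ⟨[(m, n)], by simp [psum]⟩
  | add u v hu hv =>
    obtain ⟨l1, h1⟩ := hu
    obtain ⟨l2, h2⟩ := hv
    refine ⟨l1 ++ l2, ?_⟩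
    rw [← h1, ← h2]
    simp [psum]

lemma map_psum (f : M →ₗ[k] M') (g : N →ₗ[k] N') (l : List (M × N)) :
    TensorProduct.map f g (psum k l) = psum k (l.map fun p => (f p.1, g p.2)) := by
  induction l with
  | nil => simp [psum]
  | cons p l ih => simp [psum_cons, ih]

lemma lTensor_psum (g : N →ₗ[k] N') (l : List (M × N)) :
    lTensor M g (psum k l) = psum k (l.map fun p => (p.1, g p.2)) :=
  map_psum _ _ _

lemma rTensor_psum (f : M →ₗ[k] M') (l : List (M × N)) :
    rTensor N f (psum k l) = psum k (l.map fun p => (f p.1, p.2)) :=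
  map_psum _ _ _

lemma lift_psum (B : M →ₗ[k] N →ₗ[k] P) (l : List (M × N)) :
    TensorProduct.lift B (psum k l) = (l.map fun p => B p.1 p.2).sum := by
  induction l with
  | nil => simp [psum]
  | cons p l ih => simp [psum_cons, ih]

end Lists

section Nondeg

variable {k : Type*} [Field k]
variable {M : Type*} [AddCommGroup M] [Module k M]
variable {A : Type*} [NonUnitalRing A] [Module k A] [SMulCommClass k A A] [IsScalarTower k A A]

/-- contraction of the first leg by a functional -/
noncomputable def ctr (f : M →ₗ[k] k) : M ⊗[k] A →ₗ[k] A :=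
  (TensorProduct.lid k A).toLinearMap ∘ₗ rTensor A f

@[simp] lemma ctr_tmul (f : M →ₗ[k] k) (m : M) (a : A) : ctr f (m ⊗ₜ a) = f m • a := rfl

lemma eq_zero_of_ctr (w : M ⊗[k] A) (h : ∀ f : M →ₗ[k] k, ctr f w = 0) : w = 0 := by
  classical
  let b := Module.Basis.ofVectorSpace k M
  let iso : M ⊗[k] A ≃ₗ[k] (_ →₀ A) :=
    (TensorProduct.congr b.repr (LinearEquiv.refl k A)).trans
      (TensorProduct.finsuppScalarLeft k A _)
  have key : ∀ i, iso w i = ctr (b.coord i) w := by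
    intro i
    have : ∀ w : M ⊗[k] A, iso w i = ctr (b.coord i) w := by
      intro w
      induction w with
      | zero => simp
      | tmul m x => simp [iso, TensorProduct.finsuppScalarLeft_apply_tmul_apply, Module.Basis.coord]
      | add u v hu hv => simp [map_add, hu, hv, Finsupp.add_apply]
    exact this w
  have hz : iso w = 0 := by
    ext i
    rw [key i, h]
    rfl
  have := congrArg iso.symm hz
  simpa using this

end Nondeg

section Nondeg2

variable {k : Type*} [Field k]
variable {M : Type*} [AddCommGroup M] [Module k M]
variable {A : Type*} [NonUnitalRing A] [Module k A] [SMulCommClass k A A] [IsScalarTower k A A]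

/-- contraction of the second leg by a functional -/
noncomputable def ctr' (f : M →ₗ[k] k) : A ⊗[k] M →ₗ[k] A :=
  (TensorProduct.rid k A).toLinearMap ∘ₗ lTensor A f

@[simp] lemma ctr'_tmul (f : M →ₗ[k] k) (a : A) (m : M) : ctr' f (a ⊗ₜ m) = f m • a := rfl

lemma eq_zero_of_ctr' (w : A ⊗[k] M) (h : ∀ f : M →ₗ[k] k, ctr' f w = 0) : w = 0 := by
  have key : ∀ f : M →ₗ[k] k, ctr f ((TensorProduct.comm k A M) w) = 0 := by
    intro f
    have : ∀ w : A ⊗[k] M, ctr f ((TensorProduct.comm k A M) w) = ctr' f w := by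
      intro w
      induction w with
      | zero => simp
      | tmul a m => simp
      | add u v hu hv => simp [map_add, hu, hv]
    rw [this, h]
  have := eq_zero_of_ctr _ key
  simpa using congrArg (TensorProduct.comm k A M).symm this

/-- V1 : second-leg right multiplications detect zero. -/
lemma nd_V1 (hA : NondegProd A) (w : M ⊗[k] A)
    (h : ∀ c : A, lTensor M (LinearMap.mulRight k c) w = 0) : w = 0 := by
  apply eq_zero_of_ctr
  intro f
  apply hA.1
  intro c
  have : ∀ w : M ⊗[k] A, ctr f w * c = ctr f (lTensor M (LinearMap.mulRight k c) w) := by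
    intro w
    induction w with
    | zero => simp
    | tmul m a => simp [smul_mul_assoc]
    | add u v hu hv => simp [map_add, add_mul, hu, hv]
  rw [this, h]
  simp

/-- V2 : first-leg left multiplications detect zero. -/
lemma nd_V2 (hA : NondegProd A) (w : A ⊗[k] M)
    (h : ∀ d : A, rTensor M (LinearMap.mulLeft k d) w = 0) : w = 0 := by
  apply eq_zero_of_ctr'
  intro f
  apply hA.2
  intro d
  have : ∀ w : A ⊗[k] M, d * ctr' f w = ctr' f (rTensor M (LinearMap.mulLeft k d) w) := by
    intro w
    induction w with
    | zero => simp
    | tmul a m => simp [mul_smul_comm]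
    | add u v hu hv => simp [map_add, mul_add, hu, hv]
  rw [this, h]
  simp

/-- V3 : first-leg right multiplications detect zero. -/
lemma nd_V3 (hA : NondegProd A) (w : A ⊗[k] M)
    (h : ∀ c : A, rTensor M (LinearMap.mulRight k c) w = 0) : w = 0 := by
  apply eq_zero_of_ctr'
  intro f
  apply hA.1
  intro c
  have : ∀ w : A ⊗[k] M, ctr' f w * c = ctr' f (rTensor M (LinearMap.mulRight k c) w) := by
    intro w
    induction w with
    | zero => simp
    | tmul a m => simp [smul_mul_assoc]
    | add u v hu hv => simp [map_add, add_mul, hu, hv]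
  rw [this, h]
  simp

end Nondeg2

section MultLemmas

variable {k : Type*} [Field k]
variable {B : Type*} [NonUnitalRing B] [Module k B] [SMulCommClass k B B] [IsScalarTower k B B]

lemma incl_mul (u : B) (n : Multiplier k B) :
    Multiplier.incl (k := k) u * n = Multiplier.incl (n.V u) := by
  ext w
  · exact (n.compat u w).symm
  · exact n.V_mul w u

lemma mul_incl (u : B) (n : Multiplier k B) :
    n * Multiplier.incl (k := k) u = Multiplier.incl (n.U u) := by
  ext w
  · exact n.U_mul u w
  · exact n.compat w u

end MultLemmas

section TensorRing

variable {k : Type*} [Field k]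
variable {A : Type*} [NonUnitalRing A] [Module k A] [SMulCommClass k A A] [IsScalarTower k A A]

lemma mul_tmul_eq (u : A ⊗[k] A) (x y : A) :
    u * (x ⊗ₜ[k] y) = lTensor A (LinearMap.mulRight k y) (rTensor A (LinearMap.mulRight k x) u) := by
  induction u with
  | zero => simp
  | tmul a b => simp [Algebra.TensorProduct.tmul_mul_tmul]
  | add u v hu hv => simp [add_mul, hu, hv, map_add]

lemma incl_injective (hA : NondegProd A) :
    Function.Injective (Multiplier.incl (k := k) (A := A ⊗[k] A)) := by
  intro u v huv
  have h0 : ∀ w : A ⊗[k] A, (u - v) * w = 0 := by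
    intro w
    have : u * w = v * w := congrArg (fun m => Multiplier.U m w) huv
    simp [sub_mul, this]
  have : u - v = 0 := by
    apply nd_V3 hA
    intro x
    apply nd_V1 hA
    intro y
    rw [← mul_tmul_eq]
    exact h0 _
  exact sub_eq_zero.mp this

end TensorRing

section Hopf

variable {k : Type*} [Field k]
variable {A : Type*} [NonUnitalRing A] [Module k A] [SMulCommClass k A A] [IsScalarTower k A A]

@[simp] lemma oneT_U (c : A) (w : A ⊗[k] A) :
    (oneT k A A c).U w = lTensor A (LinearMap.mulLeft k c) w := rfl
@[simp] lemma oneT_V (c : A) (w : A ⊗[k] A) :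
    (oneT k A A c).V w = lTensor A (LinearMap.mulRight k c) w := rfl
@[simp] lemma tOne_U (c : A) (w : A ⊗[k] A) :
    (tOne k A A c).U w = rTensor A (LinearMap.mulLeft k c) w := rfl
@[simp] lemma tOne_V (c : A) (w : A ⊗[k] A) :
    (tOne k A A c).V w = rTensor A (LinearMap.mulRight k c) w := rfl

lemma incl_mul_oneT (u : A ⊗[k] A) (c : A) :
    Multiplier.incl (k := k) u * oneT k A A c
      = Multiplier.incl (lTensor A (LinearMap.mulRight k c) u) :=
  incl_mul u (oneT k A A c)

lemma oneT_mul_incl (u : A ⊗[k] A) (c : A) :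
    oneT k A A c * Multiplier.incl (k := k) u
      = Multiplier.incl (lTensor A (LinearMap.mulLeft k c) u) :=
  mul_incl u (oneT k A A c)

lemma incl_mul_tOne (u : A ⊗[k] A) (c : A) :
    Multiplier.incl (k := k) u * tOne k A A c
      = Multiplier.incl (rTensor A (LinearMap.mulRight k c) u) :=
  incl_mul u (tOne k A A c)

lemma tOne_mul_incl (u : A ⊗[k] A) (c : A) :
    tOne k A A c * Multiplier.incl (k := k) u
      = Multiplier.incl (rTensor A (LinearMap.mulLeft k c) u) :=
  mul_incl u (tOne k A A c)

/-- `tOne` and `oneT` commute. -/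
lemma tOne_oneT_comm (x c : A) :
    tOne k A A x * oneT k A A c = oneT k A A c * tOne k A A x := by
  have hU : (tOne k A A x * oneT k A A c).U = (oneT k A A c * tOne k A A x).U := by
    apply TensorProduct.ext'
    intro p q
    show rTensor A (LinearMap.mulLeft k x) (lTensor A (LinearMap.mulLeft k c) (p ⊗ₜ q))
      = lTensor A (LinearMap.mulLeft k c) (rTensor A (LinearMap.mulLeft k x) (p ⊗ₜ q))
    simp
  have hV : (tOne k A A x * oneT k A A c).V = (oneT k A A c * tOne k A A x).V := by
    apply TensorProduct.ext'
    intro p q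
    show lTensor A (LinearMap.mulRight k c) (rTensor A (LinearMap.mulRight k x) (p ⊗ₜ q))
      = rTensor A (LinearMap.mulRight k x) (lTensor A (LinearMap.mulRight k c) (p ⊗ₜ q))
    simp
  exact Multiplier.ext hU hV

variable (H : MHA k A)

lemma ml1 (a e c : A) :
    lTensor A (LinearMap.mulRight k c) (H.T4 (a ⊗ₜ e))
      = lTensor A (LinearMap.mulLeft k e) (H.T1 (a ⊗ₜ c)) := by
  apply incl_injective H.nondeg
  rw [← incl_mul_oneT, ← oneT_mul_incl, ← H.hT4, ← H.hT1, mul_assoc]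

lemma ml2 (d b c : A) :
    lTensor A (LinearMap.mulRight k c) (H.T2 (d ⊗ₜ b))
      = rTensor A (LinearMap.mulLeft k d) (H.T1 (b ⊗ₜ c)) := by
  apply incl_injective H.nondeg
  rw [← incl_mul_oneT, ← tOne_mul_incl, ← H.hT2, ← H.hT1, mul_assoc]

lemma ml3 (d u c : A) :
    rTensor A (LinearMap.mulLeft k d) (H.T4 (u ⊗ₜ c))
      = lTensor A (LinearMap.mulLeft k c) (H.T2 (d ⊗ₜ u)) := by
  apply incl_injective H.nondeg
  rw [← tOne_mul_incl, ← oneT_mul_incl, ← H.hT4, ← H.hT2,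
      ← mul_assoc, ← mul_assoc, tOne_oneT_comm]

lemma ml4 (p r d : A) :
    lTensor A (LinearMap.mulRight k d) (H.T3 (p ⊗ₜ r))
      = rTensor A (LinearMap.mulRight k r) (H.T1 (p ⊗ₜ d)) := by
  apply incl_injective H.nondeg
  rw [← incl_mul_oneT, ← incl_mul_tOne, ← H.hT3, ← H.hT1,
      mul_assoc, mul_assoc, tOne_oneT_comm]

end Hopf

section Funct

variable {k : Type*} [Field k]
variable {A P : Type*} [NonUnitalRing A] [Module k A] [SMulCommClass k A A] [IsScalarTower k A A]
  [AddCommGroup P] [Module k P]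

lemma lem_assoc (g : A →ₗ[k] A) (w : (A ⊗[k] A) ⊗[k] A) :
    (TensorProduct.assoc k A A A) (lTensor (A ⊗[k] A) g w)
      = lTensor A (lTensor A g) ((TensorProduct.assoc k A A A) w) := by
  induction w with
  | zero => simp
  | tmul u t =>
    induction u with
    | zero => simp
    | tmul p q => simp
    | add u v hu hv => simp only [TensorProduct.add_tmul, map_add, hu, hv]
  | add u v hu hv => simp [map_add, hu, hv]

lemma lem_assoc_symm (g : A →ₗ[k] A) (w : A ⊗[k] (A ⊗[k] A)) :
    (TensorProduct.assoc k A A A).symm (lTensor A (lTensor A g) w)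
      = lTensor (A ⊗[k] A) g ((TensorProduct.assoc k A A A).symm w) := by
  have := lem_assoc (k := k) g ((TensorProduct.assoc k A A A).symm w)
  simp only [LinearEquiv.apply_symm_apply] at this
  rw [← this, LinearEquiv.symm_apply_apply]

lemma lem_swap (f : A →ₗ[k] P) (g : A →ₗ[k] A) (w : A ⊗[k] A) :
    rTensor A f (lTensor A g w) = lTensor P g (rTensor A f w) := by
  induction w with
  | zero => simp
  | tmul a b => simp
  | add u v hu hv => simp [map_add, hu, hv]

end Funct

section Co24

variable {k : Type*} [Field k]
variable {A : Type*} [NonUnitalRing A] [Module k A] [SMulCommClass k A A] [IsScalarTower k A A]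
variable (H : MHA k A)

lemma co24 (a d e : A) :
    (TensorProduct.assoc k A A A)
        (rTensor A (H.T2.toLinearMap ∘ₗ TensorProduct.mk k A A d) (H.T4 (a ⊗ₜ e)))
      = lTensor A (H.T4.toLinearMap ∘ₗ (TensorProduct.mk k A A).flip e) (H.T2 (d ⊗ₜ a)) := by
  set f := H.T2.toLinearMap ∘ₗ TensorProduct.mk k A A d with hf
  set L := (TensorProduct.assoc k A A A) (rTensor A f (H.T4 (a ⊗ₜ e)))
  set R := lTensor A (H.T4.toLinearMap ∘ₗ (TensorProduct.mk k A A).flip e) (H.T2 (d ⊗ₜ a))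
  have key : ∀ c : A, lTensor A (lTensor A (LinearMap.mulRight k c)) L
      = lTensor A (lTensor A (LinearMap.mulRight k c)) R := by
    intro c
    have s1 : lTensor A (lTensor A (LinearMap.mulRight k c)) L
        = (TensorProduct.assoc k A A A)
            (lTensor (A ⊗[k] A) (LinearMap.mulRight k c) (rTensor A f (H.T4 (a ⊗ₜ e)))) := by
      rw [lem_assoc]
    have s2 : lTensor (A ⊗[k] A) (LinearMap.mulRight k c) (rTensor A f (H.T4 (a ⊗ₜ e)))
        = rTensor A f (lTensor A (LinearMap.mulRight k c) (H.T4 (a ⊗ₜ e))) :=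
      (lem_swap f (LinearMap.mulRight k c) _).symm
    have s3 : lTensor A (LinearMap.mulRight k c) (H.T4 (a ⊗ₜ e))
        = lTensor A (LinearMap.mulLeft k e) (H.T1 (a ⊗ₜ c)) := ml1 H a e c
    have s4 : rTensor A f (lTensor A (LinearMap.mulLeft k e) (H.T1 (a ⊗ₜ c)))
        = lTensor (A ⊗[k] A) (LinearMap.mulLeft k e) (rTensor A f (H.T1 (a ⊗ₜ c))) :=
      lem_swap f (LinearMap.mulLeft k e) _
    have s5 : (TensorProduct.assoc k A A A)
        (lTensor (A ⊗[k] A) (LinearMap.mulLeft k e) (rTensor A f (H.T1 (a ⊗ₜ c))))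
        = lTensor A (lTensor A (LinearMap.mulLeft k e))
            ((TensorProduct.assoc k A A A) (rTensor A f (H.T1 (a ⊗ₜ c)))) := lem_assoc _ _
    have s6 := H.coassoc d a c
    rw [s1, s2, s3, s4, s5, s6]
    show lTensor A (lTensor A (LinearMap.mulLeft k e))
        (lTensor A (H.T1.toLinearMap ∘ₗ (TensorProduct.mk k A A).flip c) (H.T2 (d ⊗ₜ a)))
      = lTensor A (lTensor A (LinearMap.mulRight k c))
        (lTensor A (H.T4.toLinearMap ∘ₗ (TensorProduct.mk k A A).flip e) (H.T2 (d ⊗ₜ a)))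
    rw [← LinearMap.comp_apply, ← LinearMap.lTensor_comp,
        ← LinearMap.comp_apply, ← LinearMap.lTensor_comp]
    refine congrArg (fun g => lTensor A g (H.T2 (d ⊗ₜ a))) ?_
    ext s
    simp only [LinearMap.comp_apply, LinearEquiv.coe_coe, TensorProduct.mk_apply,
      LinearMap.flip_apply]
    exact (ml1 H s e c).symm
  have hz : ∀ c : A, lTensor (A ⊗[k] A) (LinearMap.mulRight k c)
      ((TensorProduct.assoc k A A A).symm (L - R)) = 0 := by
    intro c
    rw [← lem_assoc_symm]
    simp [map_sub, key c]
  have := nd_V1 (M := A ⊗[k] A) H.nondeg _ hz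
  have := congrArg (TensorProduct.assoc k A A A) this
  simp only [map_sub, LinearEquiv.apply_symm_apply, map_zero] at this
  exact sub_eq_zero.mp this

end Co24

section Antipode

variable {k : Type*} [Field k]
variable {A : Type*} [NonUnitalRing A] [Module k A] [SMulCommClass k A A] [IsScalarTower k A A]
variable (H : MHA k A)

/-- `gm H b q = q₍₁₎ ⊗ S(q₍₂₎)b`. -/
noncomputable def gm : A →ₗ[k] A →ₗ[k] A ⊗[k] A :=
  LinearMap.mk₂ k (fun b q => lTensor A H.S.toLinearMap (H.T4 (q ⊗ₜ H.S.symm b)))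
    (fun b b' q => by simp [TensorProduct.tmul_add])
    (fun c b q => by simp [TensorProduct.tmul_smul])
    (fun b q q' => by simp [TensorProduct.add_tmul])
    (fun c b q => by rw [← TensorProduct.smul_tmul', map_smul, map_smul])

@[simp] lemma gm_apply (b q : A) :
    gm H b q = lTensor A H.S.toLinearMap (H.T4 (q ⊗ₜ H.S.symm b)) := rfl

/-- `hm H c q = S⁻¹(q₍₁₎)c ⊗ q₍₂₎`. -/
noncomputable def hm : A →ₗ[k] A →ₗ[k] A ⊗[k] A :=
  LinearMap.mk₂ k (fun c q => rTensor A H.S.symm.toLinearMap (H.T2 (H.S c ⊗ₜ q)))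
    (fun c c' q => by simp [TensorProduct.add_tmul])
    (fun r c q => by rw [map_smul, ← TensorProduct.smul_tmul', map_smul, map_smul])
    (fun c q q' => by simp [TensorProduct.tmul_add])
    (fun r c q => by simp [TensorProduct.tmul_smul])

@[simp] lemma hm_apply (c q : A) :
    hm H c q = rTensor A H.S.symm.toLinearMap (H.T2 (H.S c ⊗ₜ q)) := rfl

lemma mul'_rTensor_mulLeft (a : A) (w : A ⊗[k] A) :
    LinearMap.mul' k A (rTensor A (LinearMap.mulLeft k a) w) = a * LinearMap.mul' k A w := by
  induction w with
  | zero => simp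
  | tmul p q => simp [mul_assoc]
  | add u v hu hv => simp [map_add, mul_add, hu, hv]

lemma mul'_lTensor_mulRight (c : A) (w : A ⊗[k] A) :
    LinearMap.mul' k A (lTensor A (LinearMap.mulRight k c) w) = LinearMap.mul' k A w * c := by
  induction w with
  | zero => simp
  | tmul p q => simp [mul_assoc]
  | add u v hu hv => simp [map_add, add_mul, hu, hv]

lemma hS4 (b u : A) : LinearMap.mul' k A (gm H b u) = H.counit u • b := by
  have key : ∀ a : A, a * LinearMap.mul' k A (gm H b u) = a * (H.counit u • b) := by
    intro a
    rw [← mul'_rTensor_mulLeft]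
    have e1 : rTensor A (LinearMap.mulLeft k a) (gm H b u)
        = lTensor A H.S.toLinearMap
            (rTensor A (LinearMap.mulLeft k a) (H.T4 (u ⊗ₜ H.S.symm b))) := by
      rw [gm_apply, lem_swap]
    rw [e1, ml3 H a u (H.S.symm b)]
    have e2 : H.S.toLinearMap ∘ₗ LinearMap.mulLeft k (H.S.symm b)
        = LinearMap.mulRight k (H.S (H.S.symm b)) ∘ₗ H.S.toLinearMap := by
      ext z
      exact H.S_antimul (H.S.symm b) z
    rw [← LinearMap.comp_apply (lTensor A H.S.toLinearMap), ← LinearMap.lTensor_comp, e2,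
      LinearMap.lTensor_comp, LinearMap.comp_apply, mul'_lTensor_mulRight, H.hS2,
      LinearEquiv.apply_symm_apply, smul_mul_assoc, mul_smul_comm]
  have h0 : LinearMap.mul' k A (gm H b u) - H.counit u • b = 0 :=
    H.nondeg.2 _ (fun a => by rw [mul_sub, key a, sub_self])
  exact sub_eq_zero.mp h0

lemma sflip (w : A ⊗[k] A) :
    H.S (LinearMap.mul' k A ((TensorProduct.comm k A A) (rTensor A H.S.symm.toLinearMap w)))
      = LinearMap.mul' k A (lTensor A H.S.toLinearMap w) := by
  induction w with
  | zero => simp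
  | tmul p t =>
    simp only [rTensor_tmul, TensorProduct.comm_tmul, LinearMap.mul'_apply, lTensor_tmul,
      LinearEquiv.coe_coe]
    rw [H.S_antimul, LinearEquiv.apply_symm_apply]
  | add u v hu hv => simp [map_add, hu, hv]

lemma hSinv (c u : A) :
    LinearMap.mul' k A ((TensorProduct.comm k A A) (hm H c u)) = H.counit u • c := by
  apply H.S.injective
  rw [hm_apply, sflip, H.hS2, map_smul]

end Antipode

section BigHopf

variable {k : Type*} [Field k]
variable {A : Type*} [NonUnitalRing A] [Module k A] [SMulCommClass k A A] [IsScalarTower k A A]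
variable (H : MHA k A)

lemma lTensor_toSpan (f : A →ₗ[k] k) (b : A) (w : A ⊗[k] A) :
    lTensor A (LinearMap.toSpanSingleton k A b ∘ₗ f) w = (apT k A A f w) ⊗ₜ b := by
  induction w with
  | zero => simp
  | tmul m u =>
    simp only [lTensor_tmul, LinearMap.comp_apply, LinearMap.toSpanSingleton_apply,
      apT_tmul, TensorProduct.tmul_smul, TensorProduct.smul_tmul']
  | add u v hu hv => simp [map_add, TensorProduct.add_tmul, hu, hv]

lemma rTensor_toSpan (f : A →ₗ[k] k) (c : A) (w : A ⊗[k] A) :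
    rTensor A (LinearMap.toSpanSingleton k A c ∘ₗ f) w = c ⊗ₜ (apF k A f w) := by
  induction w with
  | zero => simp
  | tmul u v =>
    simp only [rTensor_tmul, LinearMap.comp_apply, LinearMap.toSpanSingleton_apply,
      apF_tmul, TensorProduct.smul_tmul]
  | add u v hu hv => simp [map_add, TensorProduct.tmul_add, hu, hv]

lemma j1_aux (u : A ⊗[k] A) (r : A) :
    lTensor A (LinearMap.mul' k A) ((TensorProduct.assoc k A A A) (u ⊗ₜ r))
      = lTensor A (LinearMap.mulRight k r) u := by
  induction u with
  | zero => simp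
  | tmul s t => simp
  | add u v hu hv => simp only [TensorProduct.add_tmul, map_add, hu, hv]

lemma j1 (d : A) (w : A ⊗[k] A) :
    rTensor A (LinearMap.mulLeft k d) (H.T1 w)
      = lTensor A (LinearMap.mul' k A)
          ((TensorProduct.assoc k A A A)
            (rTensor A (H.T2.toLinearMap ∘ₗ TensorProduct.mk k A A d) w)) := by
  induction w with
  | zero => simp
  | tmul p r =>
    rw [rTensor_tmul, LinearMap.comp_apply]
    show rTensor A (LinearMap.mulLeft k d) (H.T1 (p ⊗ₜ r))
      = lTensor A (LinearMap.mul' k A)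
          ((TensorProduct.assoc k A A A) ((H.T2 (d ⊗ₜ p)) ⊗ₜ r))
    rw [j1_aux, ← ml2 H d p r]
  | add u v hu hv => simp only [map_add, hu, hv]

/-- covered Δ²-identity dressed for `gm`. -/
lemma co2g (d b q : A) :
    (TensorProduct.assoc k A A A)
        (rTensor A (H.T2.toLinearMap ∘ₗ TensorProduct.mk k A A d) (gm H b q))
      = lTensor A (gm H b) (H.T2 (d ⊗ₜ q)) := by
  rw [gm_apply]
  have e1 : rTensor A (H.T2.toLinearMap ∘ₗ TensorProduct.mk k A A d)
        (lTensor A H.S.toLinearMap (H.T4 (q ⊗ₜ H.S.symm b)))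
      = lTensor (A ⊗[k] A) H.S.toLinearMap
          (rTensor A (H.T2.toLinearMap ∘ₗ TensorProduct.mk k A A d)
            (H.T4 (q ⊗ₜ H.S.symm b))) :=
    lem_swap _ _ _
  rw [e1, lem_assoc, co24 H q d (H.S.symm b)]
  rw [← LinearMap.comp_apply (lTensor A (lTensor A H.S.toLinearMap)), ← LinearMap.lTensor_comp]
  refine congrArg (fun g => lTensor A g (H.T2 (d ⊗ₜ q))) ?_
  ext s
  simp

lemma h1 (q b : A) : H.T1 (gm H b q) = q ⊗ₜ b := by
  have key : ∀ d : A, rTensor A (LinearMap.mulLeft k d) (H.T1 (gm H b q))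
      = rTensor A (LinearMap.mulLeft k d) (q ⊗ₜ b) := by
    intro d
    rw [j1 H d, co2g H d b q]
    rw [← LinearMap.comp_apply (lTensor A (LinearMap.mul' k A)), ← LinearMap.lTensor_comp]
    have e2 : (LinearMap.mul' k A) ∘ₗ gm H b
        = LinearMap.toSpanSingleton k A b ∘ₗ H.counit := by
      ext u
      simp only [LinearMap.comp_apply, LinearMap.toSpanSingleton_apply]
      exact hS4 H b u
    rw [e2, lTensor_toSpan, H.hcounit2]
    simp
  have h0 := nd_V2 H.nondeg (H.T1 (gm H b q) - q ⊗ₜ b)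
    (fun d => by rw [map_sub, key d, sub_self])
  exact sub_eq_zero.mp h0

/-- `κ ((p⊗t)⊗r) = (p*r) ⊗ t`. -/
noncomputable def kap : (A ⊗[k] A) ⊗[k] A →ₗ[k] A ⊗[k] A :=
  rTensor A (LinearMap.mul' k A)
    ∘ₗ (TensorProduct.assoc k A A A).symm.toLinearMap
    ∘ₗ lTensor A (TensorProduct.comm k A A).toLinearMap
    ∘ₗ (TensorProduct.assoc k A A A).toLinearMap

@[simp] lemma kap_tmul (p t r : A) : kap ((p ⊗ₜ t) ⊗ₜ r) = (p * r) ⊗ₜ[k] t := by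
  simp [kap]

lemma kap_aux (u : A ⊗[k] A) (r : A) :
    kap (u ⊗ₜ r) = rTensor A (LinearMap.mulRight k r) u := by
  induction u with
  | zero => simp [kap]
  | tmul p t => simp
  | add u v hu hv => simp only [TensorProduct.add_tmul, map_add, hu, hv]

lemma j2 (d : A) (w : A ⊗[k] A) :
    lTensor A (LinearMap.mulRight k d) (H.T3 w)
      = kap (rTensor A (H.T1.toLinearMap ∘ₗ (TensorProduct.mk k A A).flip d) w) := by
  induction w with
  | zero => simp
  | tmul p r =>
    rw [rTensor_tmul, LinearMap.comp_apply]
    show lTensor A (LinearMap.mulRight k d) (H.T3 (p ⊗ₜ r)) = kap ((H.T1 (p ⊗ₜ d)) ⊗ₜ r)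
    rw [kap_aux, ml4 H p r d]
  | add u v hu hv => simp only [map_add, hu, hv]

/-- `Ψ (p ⊗ (u⊗v)) = (u * S⁻¹ p) ⊗ v`. -/
noncomputable def psi : A ⊗[k] (A ⊗[k] A) →ₗ[k] A ⊗[k] A :=
  rTensor A (LinearMap.mul' k A ∘ₗ (TensorProduct.comm k A A).toLinearMap)
    ∘ₗ (TensorProduct.assoc k A A A).symm.toLinearMap
    ∘ₗ rTensor (A ⊗[k] A) H.S.symm.toLinearMap

@[simp] lemma psi_tmul (p u v : A) :
    psi H (p ⊗ₜ (u ⊗ₜ v)) = (u * H.S.symm p) ⊗ₜ[k] v := by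
  simp [psi]

lemma kap_psi (p : A) (z : A ⊗[k] A) :
    kap (z ⊗ₜ H.S.symm p) = psi H (p ⊗ₜ z) := by
  induction z with
  | zero => simp [TensorProduct.zero_tmul, TensorProduct.tmul_zero]
  | tmul u v => simp
  | add u v hu hv =>
    simp only [TensorProduct.add_tmul, TensorProduct.tmul_add, map_add, hu, hv]

lemma stepB (d : A) (w : A ⊗[k] A) :
    kap (rTensor A (H.T1.toLinearMap ∘ₗ (TensorProduct.mk k A A).flip d)
        ((TensorProduct.comm k A A) (rTensor A H.S.symm.toLinearMap w)))
      = psi H (lTensor A (H.T1.toLinearMap ∘ₗ (TensorProduct.mk k A A).flip d) w) := by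
  induction w with
  | zero => simp
  | tmul p s =>
    rw [rTensor_tmul, TensorProduct.comm_tmul, rTensor_tmul, lTensor_tmul]
    exact kap_psi H p _
  | add u v hu hv => simp only [map_add, hu, hv]

lemma stepD (t : A ⊗[k] A) (v : A) :
    psi H ((TensorProduct.assoc k A A A) (t ⊗ₜ v))
      = (LinearMap.mul' k A
          ((TensorProduct.comm k A A) (rTensor A H.S.symm.toLinearMap t))) ⊗ₜ[k] v := by
  induction t with
  | zero => simp
  | tmul x y => simp
  | add u w hu hw =>
    simp only [TensorProduct.add_tmul, map_add, hu, hw]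

lemma stepD' (c : A) (z : A ⊗[k] A) :
    psi H ((TensorProduct.assoc k A A A)
        (rTensor A (H.T2.toLinearMap ∘ₗ TensorProduct.mk k A A (H.S c)) z))
      = rTensor A (LinearMap.mul' k A ∘ₗ (TensorProduct.comm k A A).toLinearMap ∘ₗ hm H c) z := by
  induction z with
  | zero => simp
  | tmul u v =>
    rw [rTensor_tmul, LinearMap.comp_apply]
    show psi H ((TensorProduct.assoc k A A A) ((H.T2 (H.S c ⊗ₜ u)) ⊗ₜ v)) = _
    rw [stepD, rTensor_tmul]
    simp
  | add u v hu hv => simp only [map_add, hu, hv]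

lemma h2 (q c : A) : H.T3 ((TensorProduct.comm k A A) (hm H c q)) = c ⊗ₜ q := by
  have key : ∀ d : A,
      lTensor A (LinearMap.mulRight k d) (H.T3 ((TensorProduct.comm k A A) (hm H c q)))
        = lTensor A (LinearMap.mulRight k d) (c ⊗ₜ q) := by
    intro d
    rw [j2 H d]
    rw [hm_apply, stepB H d, ← H.coassoc (H.S c) q d, stepD' H c]
    have e2 : LinearMap.mul' k A ∘ₗ (TensorProduct.comm k A A).toLinearMap ∘ₗ hm H c
        = LinearMap.toSpanSingleton k A c ∘ₗ H.counit := by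
      ext u
      simp only [LinearMap.comp_apply, LinearMap.toSpanSingleton_apply, LinearEquiv.coe_coe]
      exact hSinv H c u
    rw [e2, rTensor_toSpan, H.hcounit1]
    simp
  have h0 := nd_V1 H.nondeg
    (H.T3 ((TensorProduct.comm k A A) (hm H c q)) - c ⊗ₜ q)
    (fun d => by rw [map_sub, key d, sub_self])
  exact sub_eq_zero.mp h0

lemma p4a (z : A ⊗[k] A) (t : A) :
    (TensorProduct.assoc k A A A) ((rTensor A H.S.symm.toLinearMap z) ⊗ₜ (H.S t))
      = TensorProduct.map H.S.symm.toLinearMap (lTensor A H.S.toLinearMap)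
          ((TensorProduct.assoc k A A A) (z ⊗ₜ t)) := by
  induction z with
  | zero => simp
  | tmul x y => simp
  | add u v hu hv =>
    simp only [map_add, TensorProduct.add_tmul, hu, hv]

lemma p4 (b c : A) (w : A ⊗[k] A) :
    (TensorProduct.assoc k A A A) (rTensor A (hm H c) (lTensor A H.S.toLinearMap w))
      = TensorProduct.map H.S.symm.toLinearMap (lTensor A H.S.toLinearMap)
          ((TensorProduct.assoc k A A A)
            (rTensor A (H.T2.toLinearMap ∘ₗ TensorProduct.mk k A A (H.S c)) w)) := by
  induction w with
  | zero => simp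
  | tmul p t =>
    rw [lTensor_tmul, rTensor_tmul, rTensor_tmul, LinearMap.comp_apply]
    show (TensorProduct.assoc k A A A) ((hm H c p) ⊗ₜ H.S t) = _
    rw [hm_apply, p4a]
    rfl
  | add u v hu hv => simp only [map_add, hu, hv]

lemma p5 (b c : A) (v : A ⊗[k] A) :
    lTensor A (gm H b) (rTensor A H.S.symm.toLinearMap v)
      = TensorProduct.map H.S.symm.toLinearMap (lTensor A H.S.toLinearMap)
          (lTensor A (H.T4.toLinearMap ∘ₗ (TensorProduct.mk k A A).flip (H.S.symm b)) v) := by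
  induction v with
  | zero => simp
  | tmul x y =>
    rw [rTensor_tmul, lTensor_tmul, lTensor_tmul, LinearMap.comp_apply]
    simp only [TensorProduct.map_tmul, gm_apply]
    rfl
  | add u w hu hw => simp only [map_add, hu, hw]

lemma h4 (a b c : A) :
    (TensorProduct.assoc k A A A) (rTensor A (hm H c) (gm H b a))
      = lTensor A (gm H b) (hm H c a) := by
  rw [gm_apply, p4 H b c, co24 H a (H.S c) (H.S.symm b), hm_apply, p5 H b c]

end BigHopf

section RSide

variable {k : Type*} [Field k]
variable {A : Type*} [NonUnitalRing A] [Module k A] [SMulCommClass k A A] [IsScalarTower k A A]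
variable {R : Type*} [NonUnitalRing R] [Module k R] [SMulCommClass k R R] [IsScalarTower k R R]
variable (act : A →ₗ[k] R →ₗ[k] R) (m : Multiplier k R)

/-- `Uact w x = Σ act s (m.U (act t x))` for `w = Σ s ⊗ t`. -/
noncomputable def Uact : A ⊗[k] A →ₗ[k] R →ₗ[k] R :=
  TensorProduct.lift (LinearMap.mk₂ k (fun s t => act s ∘ₗ m.U ∘ₗ act t)
    (fun s s' t => by ext z; simp [map_add])
    (fun c s t => by ext z; simp [map_smul])
    (fun s t t' => by ext z; simp [map_add])
    (fun c s t => by ext z; simp [map_smul]))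

@[simp] lemma Uact_tmul (s t : A) (x : R) :
    Uact act m (s ⊗ₜ t) x = act s (m.U (act t x)) := rfl

/-- `Vact w y = Σ act s (m.V (act r y))` for `w = Σ r ⊗ s`. -/
noncomputable def Vact : A ⊗[k] A →ₗ[k] R →ₗ[k] R :=
  TensorProduct.lift (LinearMap.mk₂ k (fun r s => act s ∘ₗ m.V ∘ₗ act r)
    (fun r r' s => by ext z; simp [map_add])
    (fun c r s => by ext z; simp [map_smul])
    (fun r s s' => by ext z; simp [map_add])
    (fun c r s => by ext z; simp [map_smul]))

@[simp] lemma Vact_tmul (r s : A) (y : R) :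
    Vact act m (r ⊗ₜ s) y = act s (m.V (act r y)) := rfl

lemma Uact_psum (l : List (A × A)) (x : R) :
    Uact act m (psum k l) x = (l.map fun p => act p.1 (m.U (act p.2 x))).sum := by
  induction l with
  | nil => simp [psum]
  | cons p l ih => simp [psum_cons, map_add, ih]

lemma Vact_psum (l : List (A × A)) (y : R) :
    Vact act m (psum k l) y = (l.map fun p => act p.2 (m.V (act p.1 y))).sum := by
  induction l with
  | nil => simp [psum]
  | cons p l ih => simp [psum_cons, map_add, ih]

lemma Uact_mem (w : A ⊗[k] A) (x : R) : Uact act m w x ∈ ARspan act := by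
  induction w with
  | zero => simp only [map_zero, LinearMap.zero_apply]; exact Submodule.zero_mem _
  | tmul s t => exact Submodule.subset_span ⟨s, _, rfl⟩
  | add u v hu hv =>
    rw [map_add, LinearMap.add_apply]
    exact Submodule.add_mem _ hu hv

lemma Vact_mem (w : A ⊗[k] A) (y : R) : Vact act m w y ∈ ARspan act := by
  induction w with
  | zero => simp only [map_zero, LinearMap.zero_apply]; exact Submodule.zero_mem _
  | tmul r s => exact Submodule.subset_span ⟨s, _, rfl⟩
  | add u v hu hv =>
    rw [map_add, LinearMap.add_apply]
    exact Submodule.add_mem _ hu hv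

lemma mu_mem (t : A ⊗[k] R) : TensorProduct.lift act t ∈ ARspan act := by
  induction t with
  | zero => exact Submodule.zero_mem _
  | tmul b x => exact Submodule.subset_span ⟨b, x, rfl⟩
  | add u v hu hv => rw [map_add]; exact Submodule.add_mem _ hu hv

lemma mem_AR (u : R) (hu : u ∈ ARspan act) : ∃ t : A ⊗[k] R, TensorProduct.lift act t = u := by
  refine Submodule.span_induction ?_ ?_ ?_ ?_ hu
  · rintro z ⟨b, x, rfl⟩
    exact ⟨b ⊗ₜ x, rfl⟩
  · exact ⟨0, map_zero _⟩
  · rintro z w - - ⟨t1, rfl⟩ ⟨t2, rfl⟩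
    exact ⟨t1 + t2, map_add _ _ _⟩
  · rintro c z - ⟨t, rfl⟩
    exact ⟨c • t, map_smul _ _ _⟩

end RSide

section PModSide

variable {k : Type*} [Field k]
variable {A : Type*} [NonUnitalRing A] [Module k A] [SMulCommClass k A A] [IsScalarTower k A A]
variable {R : Type*} [NonUnitalRing R] [Module k R] [SMulCommClass k R R] [IsScalarTower k R R]
variable (H : MHA k A) (act : A →ₗ[k] R →ₗ[k] R) (e : A →ₗ[k] Multiplier k R)

/-- products of elements of `A·R` lie in `A·R`. -/
lemma AR_mul_AR (h : IsSymPModAlg H R act e) :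
    ∀ u ∈ ARspan act, ∀ v ∈ ARspan act, u * v ∈ ARspan act := by
  have gen : ∀ (b c : A) (x y : R), act b x * act c y ∈ ARspan act := by
    intro b c x y
    set C : A ⊗[k] A →ₗ[k] R := TensorProduct.lift (LinearMap.mk₂ k
        (fun p q => act p x * act q y)
        (fun p p' q => by simp [map_add, add_mul])
        (fun r p q => by simp [map_smul, smul_mul_assoc])
        (fun p q q' => by simp [map_add, mul_add])
        (fun r p q => by simp [map_smul, mul_smul_comm])) with hC
    set D : A ⊗[k] A →ₗ[k] R := TensorProduct.lift (LinearMap.mk₂ k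
        (fun p q => act p (x * act q y))
        (fun p p' q => by simp [map_add])
        (fun r p q => by simp [map_smul])
        (fun p q q' => by simp [map_add, mul_add])
        (fun r p q => by simp [map_smul, mul_smul_comm])) with hD
    have CT1 : ∀ w : A ⊗[k] A, C (H.T1 w) = D w := by
      intro w
      induction w with
      | zero => simp
      | tmul p q =>
        obtain ⟨l, hl⟩ := exists_psum (H.T1 (p ⊗ₜ q))
        have hc := h.cond1 p q x y l hl
        rw [← hl, hD]
        show C (psum k l) = act p (x * act q y)
        rw [hC, lift_psum]
        simp only [LinearMap.mk₂_apply]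
        exact hc.symm
      | add u v hu hv => simp [map_add, hu, hv]
    have Dmem : ∀ w : A ⊗[k] A, D w ∈ ARspan act := by
      intro w
      induction w with
      | zero => simp only [map_zero]; exact Submodule.zero_mem _
      | tmul p q => exact Submodule.subset_span ⟨p, _, rfl⟩
      | add u v hu hv => rw [map_add]; exact Submodule.add_mem _ hu hv
    have : act b x * act c y = C (b ⊗ₜ c) := rfl
    rw [this, ← LinearEquiv.apply_symm_apply H.T1 (b ⊗ₜ c), CT1]
    exact Dmem _
  intro u hu v hv
  obtain ⟨t1, rfl⟩ := mem_AR act u hu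
  obtain ⟨t2, rfl⟩ := mem_AR act v hv
  clear hu hv
  induction t1 with
  | zero => simp only [map_zero, zero_mul]; exact Submodule.zero_mem _
  | tmul b x =>
    induction t2 with
    | zero => simp only [map_zero, mul_zero]; exact Submodule.zero_mem _
    | tmul c y => exact gen b c x y
    | add u2 v2 hu2 hv2 =>
      rw [map_add, mul_add]
      exact Submodule.add_mem _ hu2 hv2
  | add u1 v1 hu1 hv1 =>
    rw [map_add, add_mul]
    exact Submodule.add_mem _ hu1 hv1

end PModSide

section Trilinear

variable {k : Type*} [Field k]
variable {A : Type*} [NonUnitalRing A] [Module k A] [SMulCommClass k A A] [IsScalarTower k A A]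
variable {R : Type*} [NonUnitalRing R] [Module k R] [SMulCommClass k R R] [IsScalarTower k R R]
variable (H : MHA k A) (act : A →ₗ[k] R →ₗ[k] R) (e : A →ₗ[k] Multiplier k R)
variable (m : Multiplier k R)

noncomputable def Lam (x y : R) : A ⊗[k] (A ⊗[k] A) →ₗ[k] R :=
  TensorProduct.lift ((TensorProduct.lift.equiv (RingHom.id k) A A R).toLinearMap ∘ₗ
    LinearMap.mk₂ k (fun r u => (LinearMap.mul k R (act u (m.V (act r y)))) ∘ₗ (act.flip x))
      (fun r r' u => by ext v; simp [map_add, add_mul])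
      (fun c r u => by ext v; simp [map_smul, smul_mul_assoc])
      (fun r u u' => by ext v; simp [map_add, add_mul])
      (fun c r u => by ext v; simp [map_smul, smul_mul_assoc]))

@[simp] lemma Lam_tmul (x y : R) (r u v : A) :
    Lam act m x y (r ⊗ₜ (u ⊗ₜ v)) = act u (m.V (act r y)) * act v x := by
  simp [Lam]

noncomputable def Om (x y : R) : A ⊗[k] (A ⊗[k] A) →ₗ[k] R :=
  TensorProduct.lift ((TensorProduct.lift.equiv (RingHom.id k) A A R).toLinearMap ∘ₗ
    LinearMap.mk₂ k (fun r u => act u ∘ₗ (LinearMap.mul k R (m.V (act r y))) ∘ₗ (act.flip x))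
      (fun r r' u => by ext v; simp [map_add, add_mul])
      (fun c r u => by ext v; simp [map_smul, smul_mul_assoc])
      (fun r u u' => by ext v; simp [map_add])
      (fun c r u => by ext v; simp [map_smul]))

@[simp] lemma Om_tmul (x y : R) (r u v : A) :
    Om act m x y (r ⊗ₜ (u ⊗ₜ v)) = act u (m.V (act r y) * act v x) := by
  simp [Om]

noncomputable def Gam (x y : R) : (A ⊗[k] A) ⊗[k] A →ₗ[k] R :=
  TensorProduct.lift (TensorProduct.lift
    (LinearMap.mk₂ k (fun u v => (LinearMap.mul k R (act u y)) ∘ₗ act v ∘ₗ m.U ∘ₗ (act.flip x))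
      (fun u u' v => by ext t; simp [map_add, add_mul])
      (fun c u v => by ext t; simp [map_smul, smul_mul_assoc])
      (fun u v v' => by ext t; simp [map_add, mul_add])
      (fun c u v => by ext t; simp [map_smul, mul_smul_comm])))

@[simp] lemma Gam_tmul (x y : R) (u v t : A) :
    Gam act m x y ((u ⊗ₜ v) ⊗ₜ t) = act u y * act v (m.U (act t x)) := by
  simp [Gam]

lemma Lam_psum (x y : R) (r : A) (l : List (A × A)) :
    Lam act m x y (r ⊗ₜ psum k l)
      = (l.map fun p => act p.1 (m.V (act r y)) * act p.2 x).sum := by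
  induction l with
  | nil => simp [psum]
  | cons p l ih => rw [psum_cons, TensorProduct.tmul_add, map_add, ih]; simp

lemma Gam_psum (x y : R) (t : A) (l : List (A × A)) :
    Gam act m x y (psum k l ⊗ₜ t)
      = (l.map fun p => act p.1 y * act p.2 (m.U (act t x))).sum := by
  induction l with
  | nil => simp [psum]
  | cons p l ih => rw [psum_cons, TensorProduct.add_tmul, map_add, ih]; simp

variable {H act e}

lemma eLHS (x y : R) (b : A) (w : A ⊗[k] A) :
    Vact act m w y * act b x
      = Lam act m x y (lTensor A ((TensorProduct.mk k A A).flip b) w) := by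
  induction w with
  | zero => simp
  | tmul r s => simp
  | add u v hu hv => simp [map_add, add_mul, hu, hv]

lemma eRHS (x y : R) (c : A) (w : A ⊗[k] A) :
    act c y * Uact act m w x
      = Gam act m x y (rTensor A (TensorProduct.mk k A A c) w) := by
  induction w with
  | zero => simp
  | tmul s t => simp
  | add u v hu hv => simp [map_add, mul_add, hu, hv]

lemma leg1 (h : IsSymPModAlg H R act e) (x y : R) (X : A ⊗[k] (A ⊗[k] A)) :
    Lam act m x y (lTensor A H.T1.toLinearMap X) = Om act m x y X := by
  induction X with
  | zero => simp
  | tmul r z =>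
    rw [lTensor_tmul]
    induction z with
    | zero => simp
    | tmul s t =>
      obtain ⟨l, hl⟩ := exists_psum (H.T1 (s ⊗ₜ t))
      rw [LinearEquiv.coe_coe, ← hl, Lam_psum, Om_tmul]
      exact (h.cond1 s t (m.V (act r y)) x l hl).symm
    | add z1 z2 h1 h2 => simp only [TensorProduct.tmul_add, map_add, h1, h2]
  | add X1 X2 h1 h2 => simp only [map_add, h1, h2]

lemma leg2 (h : IsSymPModAlg H R act e) (x y : R) (W : (A ⊗[k] A) ⊗[k] A) :
    Om act m x y ((TensorProduct.assoc k A A A) W)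
      = Gam act m x y
          (rTensor A (H.T3.toLinearMap ∘ₗ (TensorProduct.comm k A A).toLinearMap) W) := by
  induction W with
  | zero => simp
  | tmul z t =>
    induction z with
    | zero => simp [TensorProduct.zero_tmul]
    | tmul r s =>
      rw [rTensor_tmul, LinearMap.comp_apply, LinearEquiv.coe_coe, LinearEquiv.coe_coe,
        TensorProduct.comm_tmul, TensorProduct.assoc_tmul, Om_tmul]
      obtain ⟨l, hl⟩ := exists_psum (H.T3 (s ⊗ₜ r))
      rw [← hl, Gam_psum, m.compat]
      exact h.cond5 s r y (m.U (act t x)) l hl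
    | add z1 z2 h1 h2 => simp only [TensorProduct.add_tmul, map_add, h1, h2]
  | add W1 W2 h1 h2 => simp only [map_add, h1, h2]

lemma p1pure (h : IsSymPModAlg H R act e) (a b c : A) (x y : R) :
    Vact act m (hm H c a) y * act b x = act c y * Uact act m (gm H b a) x := by
  rw [eLHS m x y b (hm H c a)]
  have hmk : (TensorProduct.mk k A A).flip b = H.T1.toLinearMap ∘ₗ gm H b := by
    ext q
    simp only [LinearMap.flip_apply, TensorProduct.mk_apply, LinearMap.comp_apply,
      LinearEquiv.coe_coe]
    exact (h1 H q b).symm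
  rw [hmk, LinearMap.lTensor_comp, LinearMap.comp_apply, leg1 m h x y, ← h4 H a b c,
    leg2 m h x y, ← LinearMap.comp_apply (rTensor A _), ← LinearMap.rTensor_comp]
  have hmk2 : (H.T3.toLinearMap ∘ₗ (TensorProduct.comm k A A).toLinearMap) ∘ₗ hm H c
      = TensorProduct.mk k A A c := by
    ext q
    simp only [LinearMap.comp_apply, LinearEquiv.coe_coe, TensorProduct.mk_apply]
    exact h2 H q c
  rw [hmk2, ← eRHS]

variable (H act)

noncomputable def Fmap (a : A) : A ⊗[k] R →ₗ[k] R :=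
  TensorProduct.lift ((Uact act m) ∘ₗ (gm H).flip a)

@[simp] lemma Fmap_tmul (a b : A) (x : R) :
    Fmap H act m a (b ⊗ₜ x) = Uact act m (gm H b a) x := rfl

noncomputable def Gmap (a : A) : A ⊗[k] R →ₗ[k] R :=
  TensorProduct.lift ((Vact act m) ∘ₗ (hm H).flip a)

@[simp] lemma Gmap_tmul (a c : A) (y : R) :
    Gmap H act m a (c ⊗ₜ y) = Vact act m (hm H c a) y := rfl

lemma Fmap_mem (a : A) (t : A ⊗[k] R) : Fmap H act m a t ∈ ARspan act := by
  induction t with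
  | zero => simp only [map_zero]; exact Submodule.zero_mem _
  | tmul b x => rw [Fmap_tmul]; exact Uact_mem act m _ x
  | add u v hu hv => rw [map_add]; exact Submodule.add_mem _ hu hv

lemma Gmap_mem (a : A) (t : A ⊗[k] R) : Gmap H act m a t ∈ ARspan act := by
  induction t with
  | zero => simp only [map_zero]; exact Submodule.zero_mem _
  | tmul c y => rw [Gmap_tmul]; exact Vact_mem act m _ y
  | add u v hu hv => rw [map_add]; exact Submodule.add_mem _ hu hv

variable {H act}

lemma p1full (h : IsSymPModAlg H R act e) (a : A) (s t : A ⊗[k] R) :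
    Gmap H act m a s * TensorProduct.lift act t
      = TensorProduct.lift act s * Fmap H act m a t := by
  induction s with
  | zero => simp
  | tmul c y =>
    induction t with
    | zero => simp
    | tmul b x =>
      rw [Gmap_tmul, Fmap_tmul]
      exact p1pure m h a b c x y
    | add u v hu hv => simp only [map_add, mul_add, hu, hv]
  | add u v hu hv => simp only [map_add, add_mul, hu, hv]

end Trilinear

end PMAux
/-- **Lemma 4.12.**  Let `(R, ·, 𝔢)` be a symmetric partial `A`-module algebra such that
`A·R` has nondegenerate product.  For `m ∈ M(R)` and `a ∈ A`, the pair of linear maps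
on `A·R` determined by `(a·m)(b·x) = a₍₁₎·(m(S(a₍₂₎)b·x))` and
`(b·x)(a·m) = a₍₂₎·((S⁻¹(a₍₁₎)b·x)m)` is a well-defined multiplier:
`a·m ∈ M(A·R)`. -/
theorem extension_to_multiplier_of_AR
    (H : MHA k A) (hR : NondegProd R)
    (act : A →ₗ[k] R →ₗ[k] R) (e : A →ₗ[k] Multiplier k R)
    (h : IsSymPModAlg H R act e)
    (hAR : (∀ u ∈ ARspan act, (∀ v ∈ ARspan act, u * v = 0) → u = 0)
         ∧ ∀ v ∈ ARspan act, (∀ u ∈ ARspan act, u * v = 0) → v = 0)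
    (a : A) (m : Multiplier k R) :
    ∃ (U V : ↥(ARspan act) →ₗ[k] ↥(ARspan act)),
      (∀ (b : A) (x : R) (l : List (A × A)), psum k l = H.T4 (a ⊗ₜ H.S.symm b) →
        ((U ⟨act b x, Submodule.subset_span ⟨b, x, rfl⟩⟩ : R)
          = (l.map fun p => act p.1 (m.U (act (H.S p.2) x))).sum))
      ∧ (∀ (b : A) (x : R) (l : List (A × A)), psum k l = H.T2 (H.S b ⊗ₜ a) →
        ((V ⟨act b x, Submodule.subset_span ⟨b, x, rfl⟩⟩ : R)
          = (l.map fun p => act p.2 (m.V (act (H.S.symm p.1) x))).sum))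
      ∧ (∀ u v w : ↥(ARspan act), (u : R) * v = (w : R) → (U w : R) = (U u : R) * v)
      ∧ (∀ u v w : ↥(ARspan act), (u : R) * v = (w : R) → (V w : R) = (u : R) * (V v : R))
      ∧ (∀ u v : ↥(ARspan act), (V u : R) * v = (u : R) * (U v : R)) := by
  classical
  open PMAux in
  -- the corestricted action map
  set μ₀ : A ⊗[k] R →ₗ[k] ↥(ARspan act) :=
    LinearMap.codRestrict (ARspan act) (TensorProduct.lift act) (PMAux.mu_mem act) with hμ₀
  have μ₀val : ∀ t : A ⊗[k] R, (μ₀ t : R) = TensorProduct.lift act t := fun t => rfl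
  have μ₀surj : Function.Surjective μ₀ := by
    rintro ⟨u, hu⟩
    obtain ⟨t, ht⟩ := PMAux.mem_AR act u hu
    exact ⟨t, Subtype.ext ht⟩
  set F₀ : A ⊗[k] R →ₗ[k] ↥(ARspan act) :=
    LinearMap.codRestrict (ARspan act) (PMAux.Fmap H act m a) (PMAux.Fmap_mem H act m a)
    with hF₀
  set G₀ : A ⊗[k] R →ₗ[k] ↥(ARspan act) :=
    LinearMap.codRestrict (ARspan act) (PMAux.Gmap H act m a) (PMAux.Gmap_mem H act m a)
    with hG₀
  have F₀val : ∀ t, (F₀ t : R) = PMAux.Fmap H act m a t := fun t => rfl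
  have G₀val : ∀ t, (G₀ t : R) = PMAux.Gmap H act m a t := fun t => rfl
  have hkerF : LinearMap.ker μ₀ ≤ LinearMap.ker F₀ := by
    intro t ht
    rw [LinearMap.mem_ker] at ht ⊢
    have hμ : TensorProduct.lift act t = 0 := by
      rw [← μ₀val, ht]; rfl
    apply Subtype.ext
    rw [F₀val]
    show PMAux.Fmap H act m a t = (0 : R)
    apply hAR.2 _ (PMAux.Fmap_mem H act m a t)
    intro u hu
    obtain ⟨s, rfl⟩ := PMAux.mem_AR act u hu
    rw [← PMAux.p1full m h a s t, hμ, mul_zero]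
  have hkerG : LinearMap.ker μ₀ ≤ LinearMap.ker G₀ := by
    intro t ht
    rw [LinearMap.mem_ker] at ht ⊢
    have hμ : TensorProduct.lift act t = 0 := by
      rw [← μ₀val, ht]; rfl
    apply Subtype.ext
    rw [G₀val]
    show PMAux.Gmap H act m a t = (0 : R)
    apply hAR.1 _ (PMAux.Gmap_mem H act m a t)
    intro u hu
    obtain ⟨s, rfl⟩ := PMAux.mem_AR act u hu
    rw [PMAux.p1full m h a t s, hμ, zero_mul]
  set eiso := LinearMap.quotKerEquivOfSurjective μ₀ μ₀surj with heiso
  have heisomk : ∀ t, eiso (Submodule.Quotient.mk t) = μ₀ t := by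
    intro t
    simp [heiso, LinearMap.quotKerEquivOfSurjective]
  refine ⟨Submodule.liftQ (LinearMap.ker μ₀) F₀ hkerF ∘ₗ eiso.symm.toLinearMap,
          Submodule.liftQ (LinearMap.ker μ₀) G₀ hkerG ∘ₗ eiso.symm.toLinearMap,
          ?_, ?_, ?_, ?_, ?_⟩
  all_goals
    have hUapp : ∀ t, (Submodule.liftQ (LinearMap.ker μ₀) F₀ hkerF ∘ₗ eiso.symm.toLinearMap)
        (μ₀ t) = F₀ t := by
      intro t
      have h1 : eiso.symm (μ₀ t) = Submodule.Quotient.mk t := by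
        rw [← heisomk t, LinearEquiv.symm_apply_apply]
      show (Submodule.liftQ _ F₀ hkerF) (eiso.symm (μ₀ t)) = F₀ t
      rw [h1, Submodule.liftQ_apply]
    have hVapp : ∀ t, (Submodule.liftQ (LinearMap.ker μ₀) G₀ hkerG ∘ₗ eiso.symm.toLinearMap)
        (μ₀ t) = G₀ t := by
      intro t
      have h1 : eiso.symm (μ₀ t) = Submodule.Quotient.mk t := by
        rw [← heisomk t, LinearEquiv.symm_apply_apply]
      show (Submodule.liftQ _ G₀ hkerG) (eiso.symm (μ₀ t)) = G₀ t
      rw [h1, Submodule.liftQ_apply]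
  · -- formula for U on generators
    intro b x l hl
    have hsub : (⟨act b x, Submodule.subset_span ⟨b, x, rfl⟩⟩ : ↥(ARspan act))
        = μ₀ (b ⊗ₜ x) := Subtype.ext rfl
    rw [hsub, hUapp, F₀val, PMAux.Fmap_tmul]
    have hgm : gm H b a = psum k (l.map fun p => (p.1, H.S p.2)) := by
      rw [PMAux.gm_apply, ← hl, PMAux.lTensor_psum]
      rfl
    rw [hgm, PMAux.Uact_psum, List.map_map]
    rfl
  · -- formula for V on generators
    intro b x l hl
    have hsub : (⟨act b x, Submodule.subset_span ⟨b, x, rfl⟩⟩ : ↥(ARspan act))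
        = μ₀ (b ⊗ₜ x) := Subtype.ext rfl
    rw [hsub, hVapp, G₀val, PMAux.Gmap_tmul]
    have hhm : hm H b a = psum k (l.map fun p => (H.S.symm p.1, p.2)) := by
      rw [PMAux.hm_apply, ← hl, PMAux.rTensor_psum]
      rfl
    rw [hhm, PMAux.Vact_psum, List.map_map]
    rfl
  · -- U is a left multiplier-component
    intro u v w huv
    obtain ⟨s, hs⟩ := PMAux.mem_AR act u.1 u.2
    obtain ⟨r, hr⟩ := PMAux.mem_AR act w.1 w.2
    have hu : u = μ₀ s := Subtype.ext hs.symm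
    have hw : w = μ₀ r := Subtype.ext hr.symm
    have key : ∀ q ∈ ARspan act,
        q * ((Submodule.liftQ (LinearMap.ker μ₀) F₀ hkerF ∘ₗ eiso.symm.toLinearMap) w : R)
          = q * (((Submodule.liftQ (LinearMap.ker μ₀) F₀ hkerF ∘ₗ eiso.symm.toLinearMap) u : R)
              * (v : R)) := by
      intro q hq
      obtain ⟨p, rfl⟩ := PMAux.mem_AR act q hq
      rw [hw, hUapp, F₀val, hu, hUapp, F₀val]
      calc TensorProduct.lift act p * PMAux.Fmap H act m a r
          = PMAux.Gmap H act m a p * TensorProduct.lift act r :=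
            (PMAux.p1full m h a p r).symm
        _ = PMAux.Gmap H act m a p * ((u : R) * (v : R)) := by rw [hr, ← huv]
        _ = (PMAux.Gmap H act m a p * (u : R)) * (v : R) := (mul_assoc _ _ _).symm
        _ = (PMAux.Gmap H act m a p * TensorProduct.lift act s) * (v : R) := by
            rw [← hs]
        _ = (TensorProduct.lift act p * PMAux.Fmap H act m a s) * (v : R) := by
            rw [PMAux.p1full m h a p s]
        _ = TensorProduct.lift act p * (PMAux.Fmap H act m a s * (v : R)) := mul_assoc _ _ _
    have hmem1 : ((Submodule.liftQ (LinearMap.ker μ₀) F₀ hkerF ∘ₗ eiso.symm.toLinearMap) w : R)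
        ∈ ARspan act := Subtype.coe_prop _
    have hmem2 : (((Submodule.liftQ (LinearMap.ker μ₀) F₀ hkerF ∘ₗ eiso.symm.toLinearMap) u : R)
        * (v : R)) ∈ ARspan act :=
      PMAux.AR_mul_AR H act e h _ (Subtype.coe_prop _) _ (Subtype.coe_prop _)
    have hd := hAR.2 _ (Submodule.sub_mem _ hmem1 hmem2)
      (fun q hq => by rw [mul_sub, key q hq, sub_self])
    exact sub_eq_zero.mp hd
  · -- V is a right multiplier-component
    intro u v w huv
    obtain ⟨t, ht⟩ := PMAux.mem_AR act v.1 v.2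
    obtain ⟨r, hr⟩ := PMAux.mem_AR act w.1 w.2
    have hv : v = μ₀ t := Subtype.ext ht.symm
    have hw : w = μ₀ r := Subtype.ext hr.symm
    have key : ∀ q ∈ ARspan act,
        ((Submodule.liftQ (LinearMap.ker μ₀) G₀ hkerG ∘ₗ eiso.symm.toLinearMap) w : R) * q
          = ((u : R)
              * ((Submodule.liftQ (LinearMap.ker μ₀) G₀ hkerG ∘ₗ eiso.symm.toLinearMap) v : R))
            * q := by
      intro q hq
      obtain ⟨p, rfl⟩ := PMAux.mem_AR act q hq
      rw [hw, hVapp, G₀val, hv, hVapp, G₀val]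
      calc PMAux.Gmap H act m a r * TensorProduct.lift act p
          = TensorProduct.lift act r * PMAux.Fmap H act m a p := PMAux.p1full m h a r p
        _ = ((u : R) * (v : R)) * PMAux.Fmap H act m a p := by rw [hr, ← huv]
        _ = (u : R) * ((v : R) * PMAux.Fmap H act m a p) := mul_assoc _ _ _
        _ = (u : R) * (TensorProduct.lift act t * PMAux.Fmap H act m a p) := by
            rw [← ht]
        _ = (u : R) * (PMAux.Gmap H act m a t * TensorProduct.lift act p) := by
            rw [PMAux.p1full m h a t p]
        _ = ((u : R) * PMAux.Gmap H act m a t) * TensorProduct.lift act p :=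
            (mul_assoc _ _ _).symm
    have hmem1 : ((Submodule.liftQ (LinearMap.ker μ₀) G₀ hkerG ∘ₗ eiso.symm.toLinearMap) w : R)
        ∈ ARspan act := Subtype.coe_prop _
    have hmem2 : ((u : R)
        * ((Submodule.liftQ (LinearMap.ker μ₀) G₀ hkerG ∘ₗ eiso.symm.toLinearMap) v : R))
        ∈ ARspan act :=
      PMAux.AR_mul_AR H act e h _ (Subtype.coe_prop _) _ (Subtype.coe_prop _)
    have hd := hAR.1 _ (Submodule.sub_mem _ hmem1 hmem2)
      (fun q hq => by rw [sub_mul, key q hq, sub_self])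
    exact sub_eq_zero.mp hd
  · -- compatibility
    intro u v
    obtain ⟨s, hs⟩ := PMAux.mem_AR act u.1 u.2
    obtain ⟨t, ht⟩ := PMAux.mem_AR act v.1 v.2
    have hu : u = μ₀ s := Subtype.ext hs.symm
    have hv : v = μ₀ t := Subtype.ext ht.symm
    rw [hu, hv, hUapp, hVapp, F₀val, G₀val, μ₀val, μ₀val]
    exact PMAux.p1full m h a s t

end Statements
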